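/- Suppose u = (v,w) ∈ ℝ^m × Ker A^D satisfies T*(u) < ∞, let y be the maximal solution of (Ric-V) with y(0) = v, and let l ≤ m be the smallest index such that y_l is unbounded on [0, T*(u)) (so y_k is bounded on [0, T*(u)) for all k < l). Then l ∈ I, and there is a positive constant c such that lim_{t ↑ T*(u)} (T*(u) − t) y_l(t) = c. -/

import Mathlib

open Filter Topology

noncomputable section

/-- `g_i(w) = (1/2) wᵀ π_i w + (A^C w)_i`. -/
def gfun {m n : ℕ} (π : Fin m → Matrix (Fin n) (Fin n) ℝ)
    (AC : Matrix (Fin m) (Fin n) ℝ) (w : Fin n → ℝ) (i : Fin m) : ℝ :=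
  (1 / 2) * (∑ j, ∑ k, w j * π i j k * w k) + ∑ j, AC i j * w j

/-- `f_i(v,w) = (1/2) v_i² 1_{i∈I} + Σ_{k ≤ i} A^V_{ik} v_k + g_i(w)`. -/
def fRic {m n : ℕ} (I : Finset (Fin m)) (AV : Matrix (Fin m) (Fin m) ℝ)
    (π : Fin m → Matrix (Fin n) (Fin n) ℝ) (AC : Matrix (Fin m) (Fin n) ℝ)
    (v : Fin m → ℝ) (w : Fin n → ℝ) (i : Fin m) : ℝ :=
  (1 / 2) * (v i) ^ 2 * (if i ∈ I then 1 else 0)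
    + (∑ k ∈ Finset.univ.filter (fun k => k ≤ i), AV i k * v k)
    + gfun π AC w i

/-- `E(w) = {v : f_i(v,w) ≤ 0 ∀ i}`. -/
def Eset {m n : ℕ} (I : Finset (Fin m)) (AV : Matrix (Fin m) (Fin m) ℝ)
    (π : Fin m → Matrix (Fin n) (Fin n) ℝ) (AC : Matrix (Fin m) (Fin n) ℝ)
    (w : Fin n → ℝ) : Set (Fin m → ℝ) :=
  {v | ∀ i, fRic I AV π AC v w i ≤ 0}

/-- `E°(w) = {v : f_i(v,w) < 0 ∀ i}`. -/
def EsetO {m n : ℕ} (I : Finset (Fin m)) (AV : Matrix (Fin m) (Fin m) ℝ)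
    (π : Fin m → Matrix (Fin n) (Fin n) ℝ) (AC : Matrix (Fin m) (Fin n) ℝ)
    (w : Fin n → ℝ) : Set (Fin m → ℝ) :=
  {v | ∀ i, fRic I AV π AC v w i < 0}

/-- `𝔇 = {w ∈ Ker A^D : E(w) ≠ ∅}`. -/
def Dset {m n : ℕ} (I : Finset (Fin m)) (AV : Matrix (Fin m) (Fin m) ℝ)
    (π : Fin m → Matrix (Fin n) (Fin n) ℝ) (AC : Matrix (Fin m) (Fin n) ℝ)
    (AD : Matrix (Fin n) (Fin n) ℝ) : Set (Fin n → ℝ) :=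
  {w | AD.mulVec w = 0 ∧ (Eset I AV π AC w).Nonempty}

/-- `𝔇° = {w ∈ Ker A^D : E°(w) ≠ ∅}`. -/
def DsetO {m n : ℕ} (I : Finset (Fin m)) (AV : Matrix (Fin m) (Fin m) ℝ)
    (π : Fin m → Matrix (Fin n) (Fin n) ℝ) (AC : Matrix (Fin m) (Fin n) ℝ)
    (AD : Matrix (Fin n) (Fin n) ℝ) : Set (Fin n → ℝ) :=
  {w | AD.mulVec w = 0 ∧ (EsetO I AV π AC w).Nonempty}
open scoped ENNReal

/-- `y` solves `ẏ = F(y)` on `[0,T)`. -/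
def SolOn {d : ℕ} (F : (Fin d → ℝ) → (Fin d → ℝ)) (y : ℝ → Fin d → ℝ) (T : ℝ≥0∞) : Prop :=
  ∀ t : ℝ, 0 ≤ t → ENNReal.ofReal t < T → HasDerivAt y (F (y t)) t

/-- `y` is a maximal solution of `ẏ = F(y)`, with lifetime `T`: it is a solution on `[0,T)`
and no solution with the same initial value exists on a longer interval. -/
def IsMaxSol {d : ℕ} (F : (Fin d → ℝ) → (Fin d → ℝ)) (y : ℝ → Fin d → ℝ) (T : ℝ≥0∞) : Prop :=
  0 < T ∧ SolOn F y T ∧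
    ∀ (z : ℝ → Fin d → ℝ) (T' : ℝ≥0∞), T < T' → SolOn F z T' → z 0 ≠ y 0

/-- Lyapunov stability of an equilibrium point. -/
def StablePt {d : ℕ} (F : (Fin d → ℝ) → (Fin d → ℝ)) (ν : Fin d → ℝ) : Prop :=
  ∀ ε : ℝ, 0 < ε → ∃ δ : ℝ, 0 < δ ∧ ∀ (y : ℝ → Fin d → ℝ) (T : ℝ≥0∞),
    IsMaxSol F y T → ‖y 0 - ν‖ < δ →
      ∀ t : ℝ, 0 < t → ENNReal.ofReal t < T → ‖y t - ν‖ < ε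

/-- Asymptotic stability of an equilibrium point. -/
def AsympStablePt {d : ℕ} (F : (Fin d → ℝ) → (Fin d → ℝ)) (ν : Fin d → ℝ) : Prop :=
  StablePt F ν ∧ ∃ δ : ℝ, 0 < δ ∧ ∀ (y : ℝ → Fin d → ℝ) (T : ℝ≥0∞),
    IsMaxSol F y T → ‖y 0 - ν‖ < δ → T = ⊤ ∧ Filter.Tendsto y Filter.atTop (nhds ν)

private lemma barrier {x φ : ℝ → ℝ} {t0 s L : ℝ}
    (hx : ∀ t ∈ Set.Icc t0 s, HasDerivAt x (φ t) t)
    (hL : ∀ t ∈ Set.Icc t0 s, x t = L → 0 < φ t)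
    (h0 : L < x t0) : ∀ t ∈ Set.Icc t0 s, L < x t := by
  by_contra hcon
  push_neg at hcon
  obtain ⟨tb, htb, htbL⟩ := hcon
  have hts : t0 ≤ s := htb.1.trans htb.2
  have hcont : ContinuousOn x (Set.Icc t0 s) :=
    fun t ht => ((hx t ht).continuousAt).continuousWithinAt
  set bad : Set ℝ := Set.Icc t0 s ∩ x ⁻¹' Set.Iic L with hbad
  have hbadne : bad.Nonempty := ⟨tb, htb, htbL⟩
  have hbadcl : IsClosed bad :=
    hcont.preimage_isClosed_of_isClosed isClosed_Icc isClosed_Iic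
  have hbadbdd : BddBelow bad := ⟨t0, fun t ht => ht.1.1⟩
  set t2 := sInf bad with ht2
  have ht2mem : t2 ∈ bad := hbadcl.csInf_mem hbadne hbadbdd
  have ht2Icc : t2 ∈ Set.Icc t0 s := ht2mem.1
  have ht2ne : t0 < t2 := by
    rcases lt_or_eq_of_le ht2Icc.1 with h | h
    · exact h
    · exact absurd ht2mem.2 (by simp [← h, not_le.2 h0])
  have hbefore : ∀ t ∈ Set.Ico t0 t2, L < x t := by
    intro t ht
    by_contra hle
    exact absurd (csInf_le hbadbdd ⟨⟨ht.1, ht.2.le.trans ht2Icc.2⟩, not_lt.1 hle⟩)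
      (not_le.2 ht.2)
  have hne : (𝓝[<] t2).NeBot := nhdsLT_neBot t2
  have hxL : x t2 = L := by
    refine le_antisymm ht2mem.2 ?_
    have htend : Tendsto x (𝓝[<] t2) (𝓝 (x t2)) :=
      ((hx t2 ht2Icc).continuousAt.continuousWithinAt).tendsto
    refine ge_of_tendsto htend ?_
    filter_upwards [Ioo_mem_nhdsLT_of_mem ⟨ht2ne, le_refl t2⟩] with t ht
    exact (hbefore t ⟨ht.1.le, ht.2⟩).le
  have hφ : 0 < φ t2 := hL t2 ht2Icc hxL
  have hslope : Tendsto (slope x t2) (𝓝[≠] t2) (𝓝 (φ t2)) :=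
    hasDerivAt_iff_tendsto_slope.1 (hx t2 ht2Icc)
  have hslope' : Tendsto (slope x t2) (𝓝[<] t2) (𝓝 (φ t2)) :=
    hslope.mono_left (nhdsWithin_mono _ (fun t ht => ne_of_lt ht))
  have hev : ∀ᶠ t in 𝓝[<] t2, 0 < slope x t2 t := hslope'.eventually_const_lt hφ
  have hev2 : ∀ᶠ t in 𝓝[<] t2, t ∈ Set.Ioo t0 t2 :=
    Ioo_mem_nhdsLT_of_mem ⟨ht2ne, le_refl t2⟩
  obtain ⟨t, hts2, htIoo⟩ := (hev.and hev2).exists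
  have hlt : x t < x t2 := by
    have hden : t - t2 < 0 := sub_neg.2 htIoo.2
    have hsl := hts2
    rw [slope_def_field] at hsl
    have hnum : x t - x t2 = ((x t - x t2)/(t-t2))*(t-t2) :=
      (div_mul_cancel₀ _ hden.ne).symm
    nlinarith
  exact absurd (hbefore t ⟨htIoo.1.le, htIoo.2⟩) (not_lt.2 (by rw [hxL] at hlt; linarith))

private lemma stepA {x φ b : ℝ → ℝ} {T a B : ℝ} (ha : a < 0) (hB : 0 ≤ B)
    (hx : ∀ t ∈ Set.Ico 0 T, HasDerivAt x (φ t) t)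
    (hφ : ∀ t ∈ Set.Ico 0 T, φ t = a * x t + b t)
    (hb : ∀ t ∈ Set.Ico 0 T, |b t| ≤ B) :
    ∃ C, ∀ t ∈ Set.Ico 0 T, |x t| ≤ C := by
  set L1 : ℝ := max (x 0 + 1) (B / (-a) + 1) with hL1
  set L2 : ℝ := min (x 0 - 1) (-(B / (-a) + 1)) with hL2
  have hBa : 0 ≤ B / (-a) := div_nonneg hB (by linarith)
  refine ⟨max |L1| |L2|, fun t ht => ?_⟩
  have hsub : Set.Icc 0 t ⊆ Set.Ico 0 T := fun r hr => ⟨hr.1, lt_of_le_of_lt hr.2 ht.2⟩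
  have h0t : (0:ℝ) ∈ Set.Icc 0 t := ⟨le_refl 0, ht.1⟩
  -- upper bound via barrier on -x
  have hup : ∀ r ∈ Set.Icc 0 t, -L1 < -(x r) := by
    refine barrier (x := fun r => -(x r)) (φ := fun r => -(φ r)) ?_ ?_ ?_
    · exact fun r hr => (hx r (hsub hr)).neg
    · intro r hr hxr
      have hxr' : x r = L1 := by linarith [neg_injective hxr]
      have h1 : B / (-a) + 1 ≤ L1 := le_max_right _ _
      have hbr := hb r (hsub hr)
      have haL : B < (-a) * L1 := by
        have h2 : B / (-a) ≤ L1 - 1 := by linarith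
        rw [div_le_iff₀ (by linarith : (0:ℝ) < -a)] at h2
        nlinarith
      have heq := hφ r (hsub hr)
      have hbr' : b r ≤ B := (abs_le.1 hbr).2
      show 0 < -(φ r)
      rw [heq, hxr']
      nlinarith
    · have : x 0 < L1 := lt_of_lt_of_le (by linarith) (le_max_left _ _)
      show -L1 < -(x 0)
      linarith
  -- lower bound via barrier on x
  have hlo : ∀ r ∈ Set.Icc 0 t, L2 < x r := by
    refine barrier (φ := φ) ?_ ?_ ?_
    · exact fun r hr => hx r (hsub hr)
    · intro r hr hxr
      have h1 : L2 ≤ -(B / (-a) + 1) := min_le_right _ _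
      have hbr' : -B ≤ b r := (abs_le.1 (hb r (hsub hr))).1
      rw [hφ r (hsub hr), hxr]
      have haL : B < a * L2 := by
        have h2 : (-a) * (B / (-a) + 1) ≤ (-a) * (-L2) :=
          mul_le_mul_of_nonneg_left (by linarith) (by linarith)
        rw [mul_add, mul_div_cancel₀ _ (by linarith : (-a) ≠ 0)] at h2
        nlinarith
      linarith
    · exact lt_of_le_of_lt (min_le_left _ _) (by linarith)
  have h1 := hup t ⟨ht.1, le_refl t⟩
  have h2 := hlo t ⟨ht.1, le_refl t⟩
  rw [abs_le]
  constructor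
  · calc -(max |L1| |L2|) ≤ -|L2| := by simp [neg_le_neg_iff]
    _ ≤ L2 := neg_abs_le L2
    _ ≤ x t := h2.le
  · calc x t ≤ L1 := by linarith
    _ ≤ |L1| := le_abs_self L1
    _ ≤ max |L1| |L2| := le_max_left _ _

private lemma stepB {x φ b : ℝ → ℝ} {T a B : ℝ} (hT : 0 < T) (hB : 0 ≤ B)
    (hx : ∀ t ∈ Set.Ico 0 T, HasDerivAt x (φ t) t)
    (hφ : ∀ t ∈ Set.Ico 0 T, φ t = (1/2) * (x t)^2 + a * x t + b t)
    (hb : ∀ t ∈ Set.Ico 0 T, |b t| ≤ B)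
    (hub : ¬ ∃ C, ∀ t ∈ Set.Ico 0 T, |x t| ≤ C) :
    Tendsto (fun t => (T - t) * x t) (𝓝[<] T) (𝓝 2) := by
  set M0 : ℝ := 2 * (|a| + B + 1) with hM0
  clear_value M0
  have hM0one : (1:ℝ) ≤ M0 := by
    have := abs_nonneg a; linarith
  have hMkey : ∀ t ∈ Set.Ico 0 T, M0 ≤ |x t| → 1 ≤ φ t := by
    intro t ht hMx
    rw [hφ t ht]
    have h1 : |a * x t| ≤ |a| * |x t| := by rw [abs_mul]
    have h2 : -(|a| * |x t|) ≤ a * x t := by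
      have := neg_abs_le (a * x t); linarith
    have h3 : -B ≤ b t := (abs_le.1 (hb t ht)).1
    have h4 : (x t)^2 = |x t|^2 := (sq_abs _).symm
    have h5 : (1:ℝ) ≤ |x t| := le_trans hM0one hMx
    nlinarith [abs_nonneg a, abs_nonneg (x t)]
  -- global lower bound
  set L : ℝ := -(M0 + |x 0| + 1) with hLdef
  clear_value L
  have hlo : ∀ t ∈ Set.Ico 0 T, L < x t := by
    intro t ht
    have hsub : Set.Icc 0 t ⊆ Set.Ico 0 T := fun r hr => ⟨hr.1, lt_of_le_of_lt hr.2 ht.2⟩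
    refine barrier (φ := φ) (fun r hr => hx r (hsub hr)) ?_ ?_ t ⟨ht.1, le_refl t⟩
    · intro r hr hxr
      have : M0 ≤ |x r| := by
        rw [hxr, hLdef, abs_neg, abs_of_nonneg (by positivity)]
        linarith [abs_nonneg (x 0)]
      linarith [hMkey r (hsub hr) this]
    · have := neg_abs_le (x 0); linarith
  -- sup is infinite
  have hsup : ∀ C : ℝ, ∃ t ∈ Set.Ico 0 T, C < x t := by
    intro C
    push_neg at hub
    obtain ⟨t, ht, htC⟩ := hub (max C (-L))
    refine ⟨t, ht, ?_⟩
    rcases le_or_gt (x t) 0 with h | h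
    · exfalso
      have h1 : -L < |x t| := lt_of_le_of_lt (le_max_right _ _) htC
      rw [abs_of_nonpos h] at h1
      linarith [hlo t ht]
    · have h1 : C < |x t| := lt_of_le_of_lt (le_max_left _ _) htC
      rwa [abs_of_pos h] at h1
  -- tendsto atTop
  have htop : Tendsto x (𝓝[<] T) atTop := by
    rw [tendsto_atTop]
    intro C
    obtain ⟨t2, ht2, ht2C⟩ := hsup (max C M0)
    filter_upwards [Ioo_mem_nhdsLT_of_mem ⟨ht2.2, le_refl T⟩] with t ht
    have hsub : Set.Icc t2 t ⊆ Set.Ico 0 T := fun r hr =>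
      ⟨le_trans ht2.1 hr.1, lt_of_le_of_lt hr.2 ht.2⟩
    have := barrier (φ := φ) (fun r hr => hx r (hsub hr)) ?_ ht2C t ⟨ht.1.le, le_refl t⟩
    · exact le_trans (le_max_left _ _) this.le
    · intro r hr hxr
      have hM : M0 ≤ |x r| := by
        rw [hxr, abs_of_nonneg (le_trans (by linarith) (le_max_right C M0))]
        exact le_max_right _ _
      linarith [hMkey r (hsub hr) hM]
  have hinv : Tendsto (fun t => (x t)⁻¹) (𝓝[<] T) (𝓝 0) := htop.inv_tendsto_atTop
  -- main estimate
  rw [Metric.tendsto_nhds]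
  intro ε' hε'
  set ε : ℝ := min (1/2) (ε'/8) with hεdef
  clear_value ε
  have hε : 0 < ε := by rw [hεdef]; exact lt_min (by norm_num) (by linarith)
  have hεhalf : ε ≤ 1/2 := by rw [hεdef]; exact min_le_left _ _
  have hεe : ε ≤ ε'/8 := by rw [hεdef]; exact min_le_right _ _
  set Mε : ℝ := max 1 (2*(|a| + B + 1)/ε) with hMε
  clear_value Mε
  -- eventual lower bound on x
  obtain ⟨t3, ht3, ht3sub⟩ := mem_nhdsLT_iff_exists_Ioo_subset.1
    (htop.eventually_ge_atTop Mε)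
  set tε : ℝ := max ((t3+T)/2) (T/2) with htε
  clear_value tε
  have htεT : tε < T := by rw [htε]; exact max_lt (by linarith [ht3.out]) (by linarith)
  have htε0 : 0 < tε := by rw [htε]; exact lt_of_lt_of_le (by linarith) (le_max_right _ _)
  have htε3 : t3 < tε := by rw [htε]; exact lt_of_lt_of_le (by linarith [ht3.out]) (le_max_left _ _)
  have hIcoSub : ∀ t ∈ Set.Ico tε T, t ∈ Set.Ico 0 T :=
    fun t ht => ⟨le_trans htε0.le ht.1, ht.2⟩
  have hxM : ∀ t ∈ Set.Ico tε T, Mε ≤ x t := by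
    intro t ht
    exact ht3sub ⟨lt_of_lt_of_le htε3 ht.1, ht.2⟩
  have hx1 : ∀ t ∈ Set.Ico tε T, 1 ≤ x t := by
    intro t ht
    have := hxM t ht
    rw [hMε] at this
    exact le_trans (le_max_left _ _) this
  set c1 : ℝ := (1-ε)/2 with hc1
  clear_value c1
  set c2 : ℝ := (1+ε)/2 with hc2
  clear_value c2
  have hc1pos : 0 < c1 := by rw [hc1]; linarith
  have hc2pos : 0 < c2 := by rw [hc2]; linarith
  have hbound : ∀ t ∈ Set.Ico tε T, c1 * (x t)^2 ≤ φ t ∧ φ t ≤ c2 * (x t)^2 := by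
    intro t ht
    have h1 : 1 ≤ x t := hx1 t ht
    have hM : 2*(|a| + B + 1)/ε ≤ x t := by
      have := hxM t ht
      rw [hMε] at this
      exact le_trans (le_max_right _ _) this
    have hM' : 2*(|a| + B + 1) ≤ ε * x t := by
      rw [div_le_iff₀ hε] at hM; linarith [hM]
    have hkey : |a| * x t + B ≤ (ε/2) * (x t)^2 := by nlinarith [abs_nonneg a]
    have habs : -(|a| * x t) ≤ a * x t ∧ a * x t ≤ |a| * x t := by
      constructor
      · have := neg_abs_le (a * x t); rw [abs_mul, abs_of_pos (by linarith : 0 < x t)] at this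
        linarith
      · have := le_abs_self (a * x t); rw [abs_mul, abs_of_pos (by linarith : 0 < x t)] at this
        linarith
    have hbt := abs_le.1 (hb t (hIcoSub t ht))
    rw [hφ t (hIcoSub t ht)]
    constructor
    · rw [hc1]; nlinarith [habs.1, hbt.1]
    · rw [hc2]; nlinarith [habs.2, hbt.2]
  -- derivative of h = x⁻¹
  have hxpos : ∀ t ∈ Set.Ico tε T, 0 < x t :=
    fun t ht => lt_of_lt_of_le one_pos (hx1 t ht)
  have hd : ∀ t ∈ Set.Ico tε T, HasDerivAt (fun s => (x s)⁻¹) (-(φ t) / (x t)^2) t :=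
    fun t ht => (hx t (hIcoSub t ht)).inv (ne_of_gt (hxpos t ht))
  -- u1 antitone
  have hu1 : AntitoneOn (fun t => (x t)⁻¹ + c1 * t) (Set.Ico tε T) := by
    apply antitoneOn_of_deriv_nonpos (convex_Ico _ _)
    · intro t ht
      have hlin : HasDerivAt (fun s : ℝ => c1 * s) c1 t := by
        simpa using (hasDerivAt_id t).const_mul c1
      exact (((hd t ht).add hlin).continuousAt).continuousWithinAt
    · intro t ht
      rw [interior_Ico] at ht
      have hlin : HasDerivAt (fun s : ℝ => c1 * s) c1 t := by
        simpa using (hasDerivAt_id t).const_mul c1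
      exact (((hd t ⟨ht.1.le, ht.2⟩).add hlin).differentiableAt).differentiableWithinAt
    · intro t ht
      rw [interior_Ico] at ht
      have ht' : t ∈ Set.Ico tε T := ⟨ht.1.le, ht.2⟩
      have hlin : HasDerivAt (fun s : ℝ => c1 * s) c1 t := by
        simpa using (hasDerivAt_id t).const_mul c1
      have hder : deriv (fun t => (x t)⁻¹ + c1 * t) t = -(φ t) / (x t)^2 + c1 :=
        ((hd t ht').add hlin).deriv
      rw [hder]
      have h2 : (0:ℝ) < (x t)^2 := pow_pos (hxpos t ht') 2
      have h3 : c1 * (x t)^2 ≤ φ t := (hbound t ht').1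
      have h4 : c1 ≤ φ t / (x t)^2 := (le_div_iff₀ h2).2 h3
      have h5 : -(φ t) / (x t)^2 = -(φ t / (x t)^2) := by ring
      rw [h5]; linarith
  -- u2 monotone
  have hu2 : MonotoneOn (fun t => (x t)⁻¹ + c2 * t) (Set.Ico tε T) := by
    apply monotoneOn_of_deriv_nonneg (convex_Ico _ _)
    · intro t ht
      have hlin : HasDerivAt (fun s : ℝ => c2 * s) c2 t := by
        simpa using (hasDerivAt_id t).const_mul c2
      exact (((hd t ht).add hlin).continuousAt).continuousWithinAt
    · intro t ht
      rw [interior_Ico] at ht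
      have hlin : HasDerivAt (fun s : ℝ => c2 * s) c2 t := by
        simpa using (hasDerivAt_id t).const_mul c2
      exact (((hd t ⟨ht.1.le, ht.2⟩).add hlin).differentiableAt).differentiableWithinAt
    · intro t ht
      rw [interior_Ico] at ht
      have ht' : t ∈ Set.Ico tε T := ⟨ht.1.le, ht.2⟩
      have hlin : HasDerivAt (fun s : ℝ => c2 * s) c2 t := by
        simpa using (hasDerivAt_id t).const_mul c2
      have hder : deriv (fun t => (x t)⁻¹ + c2 * t) t = -(φ t) / (x t)^2 + c2 :=
        ((hd t ht').add hlin).deriv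
      rw [hder]
      have h2 : (0:ℝ) < (x t)^2 := pow_pos (hxpos t ht') 2
      have h3 : φ t ≤ c2 * (x t)^2 := (hbound t ht').2
      have h4 : φ t / (x t)^2 ≤ c2 := (div_le_iff₀ h2).2 h3
      have h5 : -(φ t) / (x t)^2 = -(φ t / (x t)^2) := by ring
      rw [h5]; linarith
  -- limits give two-sided bounds on x⁻¹
  have hlowhigh : ∀ t ∈ Set.Ico tε T, c1 * (T - t) ≤ (x t)⁻¹ ∧ (x t)⁻¹ ≤ c2 * (T - t) := by
    intro t ht
    have hnb : (𝓝[<] T).NeBot := nhdsLT_neBot T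
    have hev : ∀ᶠ s in 𝓝[<] T, s ∈ Set.Ioo t T := Ioo_mem_nhdsLT_of_mem ⟨ht.2, le_refl T⟩
    constructor
    · have hlim : Tendsto (fun s => (x s)⁻¹ + c1 * s) (𝓝[<] T) (𝓝 (0 + c1 * T)) :=
        hinv.add (((continuous_const.mul continuous_id).tendsto T).mono_left nhdsWithin_le_nhds)
      have := le_of_tendsto hlim (by
        filter_upwards [hev] with s hs
        exact hu1 ht ⟨le_trans ht.1 hs.1.le, hs.2⟩ hs.1.le)
      rw [zero_add] at this
      linarith [this]
    · have hlim : Tendsto (fun s => (x s)⁻¹ + c2 * s) (𝓝[<] T) (𝓝 (0 + c2 * T)) :=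
        hinv.add (((continuous_const.mul continuous_id).tendsto T).mono_left nhdsWithin_le_nhds)
      have := ge_of_tendsto hlim (by
        filter_upwards [hev] with s hs
        exact hu2 ht ⟨le_trans ht.1 hs.1.le, hs.2⟩ hs.1.le)
      rw [zero_add] at this
      linarith [this]
  -- conclude
  filter_upwards [Ioo_mem_nhdsLT_of_mem ⟨htεT, le_refl T⟩] with t ht
  have ht' : t ∈ Set.Ico tε T := ⟨ht.1.le, ht.2⟩
  obtain ⟨hl1, hl2⟩ := hlowhigh t ht'
  have hxp := hxpos t ht'
  have hτ : 0 < T - t := by linarith [ht.2]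
  have hxi : x t * (x t)⁻¹ = 1 := mul_inv_cancel₀ (ne_of_gt hxp)
  have hup : (T - t) * x t * (1 - ε) ≤ 2 := by
    have h := mul_le_mul_of_nonneg_left hl1 hxp.le
    rw [hxi] at h
    have heq : (T - t) * x t * (1 - ε) = 2 * (x t * (c1 * (T - t))) := by rw [hc1]; ring
    linarith
  have hdown : 2 ≤ (T - t) * x t * (1 + ε) := by
    have h := mul_le_mul_of_nonneg_left hl2 hxp.le
    rw [hxi] at h
    have heq : (T - t) * x t * (1 + ε) = 2 * (x t * (c2 * (T - t))) := by rw [hc2]; ring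
    linarith
  rw [Real.dist_eq, abs_lt]
  have hτx : 0 < (T - t) * x t := mul_pos hτ hxp
  set u : ℝ := (T - t) * x t with hu
  clear_value u
  have h4 : u ≤ 4 := by
    have h : u * (1/2) ≤ u * (1 - ε) := mul_le_mul_of_nonneg_left (by linarith) hτx.le
    linarith
  have h6 : u * ε ≤ 4 * ε := mul_le_mul_of_nonneg_right h4 hε.le
  have hexp1 : u * (1 - ε) = u - u * ε := by ring
  have hexp2 : u * (1 + ε) = u + u * ε := by ring
  constructor
  · linarith only [hdown, hexp2, h6, hεe, hε']
  · linarith only [hup, hexp1, h6, hεe, hε']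

/-- if `T*(u) < ∞` and `l` is the smallest index such that `y_l` is
unbounded on `[0, T*(u))`, then `l ∈ I` and `(T*(u) − t) y_l(t) → c` for some `c > 0` as
`t ↑ T*(u)`. -/
theorem stmt16 (m n : ℕ) (hm : 1 ≤ m)
    (I : Finset (Fin m)) (hI : I.Nonempty)
    (AV : Matrix (Fin m) (Fin m) ℝ)
    (hAVtri : ∀ i k : Fin m, i < k → AV i k = 0)
    (hAVdiag : ∀ i : Fin m, AV i i < 0)
    (hAVoff : ∀ i k : Fin m, i ≠ k → 0 ≤ AV i k)
    (π : Fin m → Matrix (Fin n) (Fin n) ℝ)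
    (hπ : ∀ i, (π i).PosSemidef)
    (AC : Matrix (Fin m) (Fin n) ℝ) (AD : Matrix (Fin n) (Fin n) ℝ)
    (v : Fin m → ℝ) (w : Fin n → ℝ) (hw : AD.mulVec w = 0)
    (y : ℝ → Fin m → ℝ) (Tstar : ℝ) (hTpos : 0 < Tstar)
    (hy : IsMaxSol (fun q => fRic I AV π AC q w) y (ENNReal.ofReal Tstar))
    (hy0 : y 0 = v)
    (l : Fin m)
    (hl : ¬ ∃ C : ℝ, ∀ t ∈ Set.Ico (0 : ℝ) Tstar, |y t l| ≤ C)
    (hlmin : ∀ k : Fin m, k < l → ∃ C : ℝ, ∀ t ∈ Set.Ico (0 : ℝ) Tstar, |y t k| ≤ C) :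
    l ∈ I ∧ ∃ c : ℝ, 0 < c ∧
      Filter.Tendsto (fun t => (Tstar - t) * y t l)
        (nhdsWithin Tstar (Set.Iio Tstar)) (nhds c) := by
  -- componentwise derivative
  have hx : ∀ t ∈ Set.Ico (0:ℝ) Tstar, HasDerivAt (fun s => y s l)
      (fRic I AV π AC (y t) w l) t := by
    intro t ht
    have h1 : ENNReal.ofReal t < ENNReal.ofReal Tstar :=
      (ENNReal.ofReal_lt_ofReal_iff hTpos).2 ht.2
    exact hasDerivAt_pi.1 (hy.2.1 t ht.1 h1) l
  -- sum splitting
  have hsplit : ∀ q : Fin m → ℝ,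
      (∑ k ∈ Finset.univ.filter (fun k => k ≤ l), AV l k * q k)
        = AV l l * q l + ∑ k ∈ Finset.univ.filter (fun k => k < l), AV l k * q k := by
    intro q
    have hset : Finset.univ.filter (fun k => k ≤ l)
        = insert l (Finset.univ.filter (fun k => k < l)) := by
      ext k
      simp [Finset.mem_filter, Finset.mem_insert, le_iff_lt_or_eq, or_comm]
    rw [hset, Finset.sum_insert (by simp)]
  -- bounded remainder
  have hchoice : ∀ k : Fin m, ∃ C : ℝ, k < l → ∀ t ∈ Set.Ico (0:ℝ) Tstar, |y t k| ≤ C := by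
    intro k
    by_cases h : k < l
    · obtain ⟨C, hC⟩ := hlmin k h
      exact ⟨C, fun _ => hC⟩
    · exact ⟨0, fun h' => absurd h' h⟩
  choose C hC using hchoice
  set b : ℝ → ℝ := fun t =>
    (∑ k ∈ Finset.univ.filter (fun k => k < l), AV l k * y t k) + gfun π AC w l with hbdef
  set B : ℝ := (∑ k ∈ Finset.univ.filter (fun k => k < l), |AV l k| * |C k|)
    + |gfun π AC w l| with hBdef
  have hB : 0 ≤ B := by
    rw [hBdef]
    have : (0:ℝ) ≤ ∑ k ∈ Finset.univ.filter (fun k => k < l), |AV l k| * |C k| :=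
      Finset.sum_nonneg (fun k _ => mul_nonneg (abs_nonneg _) (abs_nonneg _))
    positivity
  have hb : ∀ t ∈ Set.Ico (0:ℝ) Tstar, |b t| ≤ B := by
    intro t ht
    rw [hbdef, hBdef]
    refine le_trans (abs_add_le _ _) (add_le_add ?_ (le_refl _))
    refine le_trans (Finset.abs_sum_le_sum_abs _ _) (Finset.sum_le_sum ?_)
    intro k hk
    rw [abs_mul]
    have hk' : k < l := (Finset.mem_filter.1 hk).2
    exact mul_le_mul_of_nonneg_left
      (le_trans (hC k hk' t ht) (le_abs_self _)) (abs_nonneg _)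
  -- l ∈ I
  have hlI : l ∈ I := by
    by_contra hno
    refine hl (stepA (hAVdiag l) hB hx ?_ hb)
    intro t ht
    show fRic I AV π AC (y t) w l = AV l l * (y t l) + b t
    rw [fRic, if_neg hno, hsplit (y t), hbdef]
    ring
  refine ⟨hlI, 2, by norm_num, ?_⟩
  exact stepB hTpos hB hx (by
    intro t ht
    show fRic I AV π AC (y t) w l = (1/2) * (y t l)^2 + AV l l * (y t l) + b t
    rw [fRic, if_pos hlI, hsplit (y t), hbdef]
    ring) hb hl

end
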